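/- There exists a constant c > 0 such that, for all sufficiently large k, 𝓛(k) > k^{c log k}. -/

import Mathlib

/-- A word `w` (restricted to positions `< n`) contains a congruential `t`-power modulo `k`:
`t` adjacent blocks of a common length `d ≥ 1`, all of whose sums are congruent mod `k`. -/
def ContainsCongPow (k t n : ℕ) (w : ℕ → ℕ) : Prop :=
  ∃ i d : ℕ, 1 ≤ d ∧ i + t * d ≤ n ∧
    ∀ j : ℕ, j < t →
      (∑ s ∈ Finset.Ico (i + j * d) (i + (j + 1) * d), w s) ≡
        (∑ s ∈ Finset.Ico i (i + d), w s) [MOD k]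

/-- `𝓛(k, t)`: the minimum `n` such that every word of length `n` over `{0, …, k-1}`
contains a congruential `t`-power modulo `k`. -/
noncomputable def Lfn (k t : ℕ) : ℕ :=
  sInf {n : ℕ | ∀ w : ℕ → ℕ, (∀ i, w i < k) → ContainsCongPow k t n w}

/-- `Ω(m, k)`: the smallest `n` such that every set `{x₁, …, xₙ}` with
`xᵢ ∈ [(i-1)k + 1, ik]` contains an `m`-term arithmetic progression. -/
noncomputable def Omega (m k : ℕ) : ℕ :=
  sInf {n : ℕ | ∀ x : ℕ → ℕ,
    (∀ i : ℕ, 1 ≤ i → i ≤ n → (i - 1) * k + 1 ≤ x i ∧ x i ≤ i * k) →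
    ∃ a d : ℕ, 1 ≤ d ∧ ∀ j : ℕ, j < m → ∃ i : ℕ, 1 ≤ i ∧ i ≤ n ∧ x i = a + j * d}

/-- `w₁(3, k)`: the minimum `n` such that every 2-coloring of `[1, n]` admits a
3-term arithmetic progression of the first color (`true`) or `k` consecutive integers
of the second color (`false`). -/
noncomputable def wOne (k : ℕ) : ℕ :=
  sInf {n : ℕ | ∀ χ : ℕ → Bool,
    (∃ a d : ℕ, 1 ≤ a ∧ 1 ≤ d ∧ a + 2 * d ≤ n ∧ ∀ j : ℕ, j < 3 → χ (a + j * d) = true) ∨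
    (∃ a : ℕ, 1 ≤ a ∧ a + (k - 1) ≤ n ∧ ∀ j : ℕ, j < k → χ (a + j) = false)}

/-- `w(ℓ; c)`: the van der Waerden number, the minimum `n` such that every `c`-coloring of
`[1, n]` admits a monochromatic `ℓ`-term arithmetic progression. -/
noncomputable def vdW (l c : ℕ) : ℕ :=
  sInf {n : ℕ | ∀ χ : ℕ → Fin c,
    ∃ a d : ℕ, 1 ≤ a ∧ 1 ≤ d ∧ a + (l - 1) * d ≤ n ∧
      ∀ j : ℕ, j < l → χ (a + j * d) = χ a}


section Aux
open Finset Real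

lemma translate_lemma (N : ℕ) (A : Finset ℕ) (hA : A ⊆ Finset.range N)
    (h3 : ThreeAPFree (A : Set ℕ)) (S : Finset ℕ) (hS : S ⊆ Finset.range N) :
    ∃ F : Finset ℕ, F ⊆ S ∧ ThreeAPFree (F : Set ℕ) ∧
      A.card * S.card ≤ 2 * N * F.card := by
  rcases Nat.eq_zero_or_pos (A.card * S.card) with h0 | hpos
  · exact ⟨∅, empty_subset _, by simp [threeAPFree_empty], by simp [h0]⟩
  have hS0 : 0 < S.card := Nat.pos_of_mul_pos_left (a := A.card) hpos
  have hN : 0 < N := by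
    obtain ⟨x, hx⟩ := card_pos.1 hS0
    exact lt_of_le_of_lt (Nat.zero_le x) (mem_range.1 (hS hx))
  -- fiber counting
  set P : Finset (ℕ × ℕ) := S ×ˢ A with hP
  have hmaps : ∀ p ∈ P, p.1 + N - p.2 ∈ Finset.range (2 * N) := by
    intro p hp
    rw [hP, mem_product] at hp
    have h1 : p.1 < N := mem_range.1 (hS hp.1)
    have h2 : p.2 < N := mem_range.1 (hA hp.2)
    simp only [mem_range]; omega
  have hcount := Finset.card_eq_sum_card_fiberwise hmaps
  have hPcard : P.card = S.card * A.card := by rw [hP, card_product]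
  -- pigeonhole: some fiber is large
  obtain ⟨t, ht⟩ : ∃ t, A.card * S.card ≤ 2 * N *
      (P.filter (fun p => p.1 + N - p.2 = t)).card := by
    by_contra hcon
    push_neg at hcon
    have hsum : ∀ t ∈ Finset.range (2 * N),
        2 * N * (P.filter (fun p => p.1 + N - p.2 = t)).card ≤ A.card * S.card - 1 := by
      intro t _
      have := hcon t
      omega
    have := Finset.sum_le_sum hsum
    rw [← Finset.mul_sum, ← hcount, hPcard, Finset.sum_const, card_range, smul_eq_mul] at this
    have : 2 * N * (A.card * S.card) ≤ 2 * N * (A.card * S.card - 1) := by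
      calc 2 * N * (A.card * S.card) = 2 * N * (S.card * A.card) := by ring
      _ ≤ _ := this
    have h2N : 0 < 2 * N := by omega
    have := Nat.le_of_mul_le_mul_left this h2N
    omega
  refine ⟨S.filter (fun x => t ≤ x + N ∧ x + N - t ∈ A), filter_subset _ _, ?_, ?_⟩
  · -- 3AP-free
    intro x hx y hy z hz hxz
    simp only [coe_filter, Set.mem_setOf_eq] at hx hy hz
    have hx3 := hx.2.2; have hy3 := hy.2.2; have hz3 := hz.2.2
    have key : (x + N - t) + (z + N - t) = (y + N - t) + (y + N - t) := by omega
    have := h3 (by exact_mod_cast hx3) (by exact_mod_cast hy3) (by exact_mod_cast hz3) key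
    omega
  · -- cardinality
    refine le_trans ht (Nat.mul_le_mul_left _ ?_)
    apply Finset.card_le_card_of_injOn (fun p => p.1)
    · intro p hp
      simp only [mem_coe, mem_filter] at hp ⊢
      have hpP := hp.1
      have hpred : p.1 + N - p.2 = t := hp.2
      rw [hP, mem_product] at hpP
      have h2 : p.2 < N := mem_range.1 (hA hpP.2)
      refine ⟨hpP.1, by omega, ?_⟩
      have : p.1 + N - t = p.2 := by omega
      rw [this]; exact hpP.2
    · intro p hp q hq hpq
      simp only [mem_coe, mem_filter] at hp hq
      have h1 : p.1 + N - p.2 = t := hp.2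
      have h2 : q.1 + N - q.2 = t := hq.2
      have hpq' : p.1 = q.1 := hpq
      have hp2 : p.2 < N := mem_range.1 (hA (by rw [hP, mem_product] at hp; exact hp.1.2))
      have hq2 : q.2 < N := mem_range.1 (hA (by rw [hP, mem_product] at hq; exact hq.1.2))
      have : p.2 = q.2 := by omega
      exact Prod.ext hpq' this

noncomputable def stepF (N : ℕ) (A : Finset ℕ) (S : Finset ℕ) : Finset ℕ :=
  if h : A ⊆ Finset.range N ∧ ThreeAPFree (A : Set ℕ) ∧ S ⊆ Finset.range N then
    (translate_lemma N A h.1 h.2.1 S h.2.2).choose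
  else ∅

lemma stepF_spec {N : ℕ} {A : Finset ℕ} (hA : A ⊆ Finset.range N)
    (h3 : ThreeAPFree (A : Set ℕ)) {S : Finset ℕ} (hS : S ⊆ Finset.range N) :
    stepF N A S ⊆ S ∧ ThreeAPFree ((stepF N A S : Finset ℕ) : Set ℕ) ∧
      A.card * S.card ≤ 2 * N * (stepF N A S).card := by
  rw [stepF, dif_pos ⟨hA, h3, hS⟩]
  exact (translate_lemma N A hA h3 S hS).choose_spec

noncomputable def Rem (N : ℕ) (A : Finset ℕ) : ℕ → Finset ℕ
  | 0 => Finset.range N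
  | i + 1 => Rem N A i \ stepF N A (Rem N A i)

lemma Rem_subset (N : ℕ) (A : Finset ℕ) : ∀ i, Rem N A i ⊆ Finset.range N
  | 0 => subset_rfl
  | i + 1 => (sdiff_subset).trans (Rem_subset N A i)

lemma Rem_card {N : ℕ} {A : Finset ℕ} (hA : A ⊆ Finset.range N)
    (h3 : ThreeAPFree (A : Set ℕ)) :
    ∀ i, (2*N)^i * (Rem N A i).card ≤ (2*N - A.card)^i * N
  | 0 => by simp [Rem, card_range]
  | i + 1 => by
    have hsub := Rem_subset N A i
    obtain ⟨h1, h2, h3'⟩ := stepF_spec hA h3 hsub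
    have hAle : A.card ≤ N := (card_le_card hA).trans_eq (card_range N)
    have hle : (stepF N A (Rem N A i)).card ≤ (Rem N A i).card := card_le_card h1
    have hstep : 2*N * (Rem N A (i+1)).card ≤ (2*N - A.card) * (Rem N A i).card := by
      have hc : (Rem N A (i+1)).card = (Rem N A i).card - (stepF N A (Rem N A i)).card := by
        rw [Rem]; exact card_sdiff_of_subset h1
      have h2N : 2*N*(stepF N A (Rem N A i)).card ≤ 2*N*(Rem N A i).card :=
        Nat.mul_le_mul_left _ hle
      rw [hc, Nat.mul_sub, Nat.sub_mul]
      omega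
    calc (2*N)^(i+1) * (Rem N A (i+1)).card
        = (2*N)^i * (2*N * (Rem N A (i+1)).card) := by ring
      _ ≤ (2*N)^i * ((2*N - A.card) * (Rem N A i).card) := Nat.mul_le_mul_left _ hstep
      _ = (2*N - A.card) * ((2*N)^i * (Rem N A i).card) := by ring
      _ ≤ (2*N - A.card) * ((2*N - A.card)^i * N) := Nat.mul_le_mul_left _ (Rem_card hA h3 i)
      _ = (2*N - A.card)^(i+1) * N := by ring

lemma Rem_zero (N : ℕ) (A : Finset ℕ) : Rem N A 0 = Finset.range N := by rw [Rem]

lemma Rem_succ (N : ℕ) (A : Finset ℕ) (i : ℕ) :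
    Rem N A (i+1) = Rem N A i \ stepF N A (Rem N A i) := by rw [Rem]

lemma exists_bad_word {k N r K' : ℕ} {A V : Finset ℕ}
    (hA : A ⊆ Finset.range N) (h3A : ThreeAPFree (A : Set ℕ))
    (hV : V ⊆ Finset.range K') (h3V : ThreeAPFree (V : Set ℕ))
    (hk : 0 < k) (hN : 0 < N) (h2K : 2 * K' ≤ k)
    (hrE : (2*N - A.card)^r * N < (2*N)^r) (hrV : r ≤ V.card) :
    ∃ w : ℕ → ℕ, (∀ i, w i < k) ∧ ¬ContainsCongPow k 2 (N-1) w := by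
  haveI : NeZero k := ⟨hk.ne'⟩
  -- the last remainder is empty
  have hRem : (Rem N A r).card = 0 := by
    have h := Rem_card hA h3A r
    by_contra hc
    have h1 : 1 ≤ (Rem N A r).card := Nat.one_le_iff_ne_zero.2 hc
    have : (2*N)^r ≤ (2*N)^r * (Rem N A r).card := Nat.le_mul_of_pos_right _ h1
    omega
  -- coverage
  have hcover : ∀ x, x < N → ∃ i, i < r ∧ x ∈ stepF N A (Rem N A i) := by
    intro x hx
    by_contra hc
    push_neg at hc
    have hin : ∀ i, i ≤ r → x ∈ Rem N A i := by
      intro i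
      induction i with
      | zero => intro _; rw [Rem_zero]; exact mem_range.2 hx
      | succ j ih =>
        intro hjr
        rw [Rem_succ, Finset.mem_sdiff]
        exact ⟨ih (by omega), fun hmem => hc j (by omega) hmem⟩
    have := hin r le_rfl
    rw [Finset.card_eq_zero] at hRem
    simp [hRem] at this
  -- color function
  have hr1 : 0 < r := by
    rcases Nat.eq_zero_or_pos r with h | h
    · subst h; simp at hrE; omega
    · exact h
  classical
  set colP : ℕ → Prop := fun x => ∃ i, x ∈ stepF N A (Rem N A i) with hcolP
  have hdec : ∀ x, Decidable (colP x) := fun x => Classical.dec _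
  set col : ℕ → ℕ := fun x => if h : colP x then Nat.find h else 0 with hcol
  have hcol_lt : ∀ x, x < N → col x < r := by
    intro x hx
    obtain ⟨i, hir, hi⟩ := hcover x hx
    have hP : colP x := ⟨i, hi⟩
    rw [hcol]; simp only [dif_pos hP]
    exact lt_of_le_of_lt (Nat.find_le hi) hir
  have hcol_mem : ∀ x, x < N → x ∈ stepF N A (Rem N A (col x)) := by
    intro x hx
    obtain ⟨i, hir, hi⟩ := hcover x hx
    have hP : colP x := ⟨i, hi⟩
    rw [hcol]; simp only [dif_pos hP]
    exact Nat.find_spec hP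
  -- the value function
  set ν : ℕ → ℕ := fun j => if h : j < V.card then V.orderEmbOfFin rfl ⟨j, h⟩ else 0 with hν
  have hν_mem : ∀ j, j < V.card → ν j ∈ V := by
    intro j hj; rw [hν]; simp only [dif_pos hj]; exact Finset.orderEmbOfFin_mem _ _ _
  have hν_inj : ∀ j j', j < V.card → j' < V.card → ν j = ν j' → j = j' := by
    intro j j' hj hj' he
    rw [hν] at he; simp only [dif_pos hj, dif_pos hj'] at he
    have := (V.orderEmbOfFin rfl).injective he
    exact congrArg Fin.val (this : (⟨j, hj⟩ : Fin V.card) = ⟨j', hj'⟩)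
  set f : ℕ → ℕ := fun x => ν (col x) with hf
  have hf_lt : ∀ x, x < N → f x < K' := by
    intro x hx
    have h1 : col x < V.card := lt_of_lt_of_le (hcol_lt x hx) hrV
    exact mem_range.1 (hV (hν_mem _ h1))
  -- the word
  set F : ℕ → ZMod k := fun x => (f x : ZMod k) with hF
  set w : ℕ → ℕ := fun i => (F (i+1) - F i).val with hw
  refine ⟨w, fun i => ZMod.val_lt _, ?_⟩
  have hsum : ∀ u v : ℕ, u ≤ v → ((∑ s ∈ Finset.Ico u v, w s : ℕ) : ZMod k) = F v - F u := by
    intro u v huv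
    rw [Nat.cast_sum]
    have : ∀ s : ℕ, ((w s : ℕ) : ZMod k) = F (s+1) - F s := by
      intro s; rw [hw]; exact ZMod.natCast_rightInverse _
    simp only [this]
    rw [Finset.sum_Ico_eq_sum_range]
    have := Finset.sum_range_sub (fun t => F (u + t)) (v - u)
    simp only [← Nat.add_assoc] at this ⊢
    rw [this, Nat.add_sub_cancel' huv]
    norm_num
  rintro ⟨i, d, hd, hle, hcong⟩
  have hcong1 := hcong 1 (by norm_num)
  have e1 : i + 1 * d = i + d := by ring
  have e2 : i + (1+1) * d = i + 2*d := by ring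
  rw [e1, e2] at hcong1
  have hcast : ((∑ s ∈ Finset.Ico (i+d) (i+2*d), w s : ℕ) : ZMod k)
      = ((∑ s ∈ Finset.Ico i (i+d), w s : ℕ) : ZMod k) :=
    (ZMod.natCast_eq_natCast_iff _ _ _).2 hcong1
  rw [hsum (i+d) (i+2*d) (by omega), hsum i (i+d) (by omega)] at hcast
  have hadd : F (i+2*d) + F i = F (i+d) + F (i+d) :=
    (sub_eq_sub_iff_add_eq_add).1 hcast
  -- back to naturals
  have hlt : ∀ x, x < N → f x < K' := hf_lt
  have hpx : i < N := by omega
  have hpy : i + d < N := by omega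
  have hpz : i + 2*d < N := by omega
  have hnat : f (i+2*d) + f i = f (i+d) + f (i+d) := by
    have hmod : ((f (i+2*d) + f i : ℕ) : ZMod k) = ((f (i+d) + f (i+d) : ℕ) : ZMod k) := by
      push_cast
      exact hadd
    have := (ZMod.natCast_eq_natCast_iff _ _ _).1 hmod
    have hb1 : f (i+2*d) + f i < k := by have := hlt _ hpz; have := hlt _ hpx; omega
    have hb2 : f (i+d) + f (i+d) < k := by have := hlt _ hpy; omega
    rwa [Nat.ModEq, Nat.mod_eq_of_lt hb1, Nat.mod_eq_of_lt hb2] at this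
  -- 3AP-freeness of V: colors coincide
  have hcx : col i < V.card := lt_of_lt_of_le (hcol_lt _ hpx) hrV
  have hcy : col (i+d) < V.card := lt_of_lt_of_le (hcol_lt _ hpy) hrV
  have hcz : col (i+2*d) < V.card := lt_of_lt_of_le (hcol_lt _ hpz) hrV
  have hVeq : ν (col i) = ν (col (i+d)) := by
    have := h3V (a := ν (col i)) (by exact_mod_cast hν_mem _ hcx)
      (b := ν (col (i+d))) (by exact_mod_cast hν_mem _ hcy)
      (c := ν (col (i+2*d))) (by exact_mod_cast hν_mem _ hcz)
      (by have hnat' : ν (col (i+2*d)) + ν (col i) = ν (col (i+d)) + ν (col (i+d)) := hnat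
          omega)
    exact this
  have hc1 : col i = col (i+d) := hν_inj _ _ hcx hcy hVeq
  have hVeq2 : ν (col (i+2*d)) = ν (col (i+d)) := by
    have hnat' : ν (col (i+2*d)) + ν (col i) = ν (col (i+d)) + ν (col (i+d)) := hnat
    rw [hc1] at hnat'
    omega
  have hc2 : col (i+2*d) = col (i+d) := hν_inj _ _ hcz hcy hVeq2
  -- same class: contradiction with 3AP-freeness of the class
  have hclass := (stepF_spec hA h3A (Rem_subset N A (col (i+d)))).2.1
  have hx1 : i ∈ stepF N A (Rem N A (col (i+d))) := by rw [← hc1]; exact hcol_mem _ hpx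
  have hy1 : i + d ∈ stepF N A (Rem N A (col (i+d))) := hcol_mem _ hpy
  have hz1 : i + 2*d ∈ stepF N A (Rem N A (col (i+d))) := by rw [← hc2]; exact hcol_mem _ hpz
  have := hclass (a := i) (by exact_mod_cast hx1) (b := i + d) (by exact_mod_cast hy1)
    (c := i + 2*d) (by exact_mod_cast hz1) (by ring)
  omega

lemma congSet_nonempty (k : ℕ) (hk : 0 < k) :
    {n : ℕ | ∀ w : ℕ → ℕ, (∀ i, w i < k) → ContainsCongPow k 2 n w}.Nonempty := by
  by_contra h
  rw [Set.not_nonempty_iff_eq_empty] at h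
  have hall : ∀ n, ∃ w : ℕ → ℕ, (∀ i, w i < k) ∧ ¬ContainsCongPow k 2 n w := by
    intro n
    by_contra hc
    push_neg at hc
    have hmem : n ∈ {n : ℕ | ∀ w : ℕ → ℕ, (∀ i, w i < k) → ContainsCongPow k 2 n w} :=
      fun w hw => hc w hw
    rw [h] at hmem
    exact hmem
  choose W hWlt hWbad using hall
  haveI : NeZero k := ⟨hk.ne'⟩
  set χ : ℕ → ℕ → ZMod k := fun n m => ((∑ s ∈ Finset.range m, W n s : ℕ) : ZMod k) with hχ
  set U : Ultrafilter ℕ := Ultrafilter.of (Filter.cofinite : Filter ℕ) with hU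
  have hUle : (U : Filter ℕ) ≤ Filter.cofinite := Ultrafilter.of_le _
  have hlim : ∀ m : ℕ, ∃ c : ZMod k, {n | χ n m = c} ∈ U := by
    intro m
    by_contra hc
    push_neg at hc
    have hcompl : ∀ c : ZMod k, {n | χ n m = c}ᶜ ∈ U :=
      fun c => (Ultrafilter.compl_mem_iff_notMem).2 (hc c)
    have hint : (⋂ c : ZMod k, {n | χ n m = c}ᶜ) ∈ U := by
      exact Filter.iInter_mem.2 hcompl
    obtain ⟨n, hn⟩ := Ultrafilter.nonempty_of_mem hint
    simp only [Set.mem_iInter, Set.mem_compl_iff, Set.mem_setOf_eq] at hn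
    exact hn (χ n m) rfl
  choose limc hlimc using hlim
  obtain ⟨a, ha, b, c, hmono⟩ :=
    Combinatorics.exists_mono_homothetic_copy ({0, 1, 2} : Finset ℕ) limc
  have h0 : limc b = c := by simpa using hmono 0 (by simp)
  have h1 : limc (a + b) = c := by simpa [smul_eq_mul, mul_one] using hmono 1 (by simp)
  have h2 : limc (a * 2 + b) = c := by simpa [smul_eq_mul] using hmono 2 (by simp)
  have hT : ({n | χ n b = limc b} ∩ {n | χ n (a+b) = limc (a+b)}
      ∩ {n | χ n (a*2+b) = limc (a*2+b)} ∩ {n | b + 2*a + 1 ≤ n}) ∈ U := by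
    refine Filter.inter_mem (Filter.inter_mem (Filter.inter_mem ?_ ?_) ?_) ?_
    · exact hlimc b
    · exact hlimc (a+b)
    · exact hlimc (a*2+b)
    · refine hUle ?_
      rw [Filter.mem_cofinite]
      have : {n : ℕ | b + 2*a + 1 ≤ n}ᶜ ⊆ Set.Iio (b + 2*a + 1) := by
        intro n hn
        simp only [Set.mem_compl_iff, Set.mem_setOf_eq, not_le] at hn
        exact hn
      exact (Set.finite_Iio _).subset this
  obtain ⟨n, hn⟩ := Ultrafilter.nonempty_of_mem hT
  obtain ⟨⟨⟨hn0, hn1⟩, hn2⟩, hn3⟩ := hn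
  simp only [Set.mem_setOf_eq] at hn0 hn1 hn2 hn3
  apply hWbad n
  refine ⟨b, a, ha, by omega, ?_⟩
  have key : ∀ u v : ℕ, u ≤ v →
      ((∑ s ∈ Finset.Ico u v, W n s : ℕ) : ZMod k) = χ n v - χ n u := by
    intro u v huv
    rw [hχ]
    simp only [Nat.cast_sum]
    rw [Finset.sum_Ico_eq_sub _ huv]
  intro j hj
  interval_cases j
  · have e1 : b + 0 * a = b := by ring
    have e2 : b + (0 + 1) * a = b + a := by ring
    rw [e1, e2]
  · have e1 : b + 1 * a = b + a := by ring
    have e2 : b + (1 + 1) * a = b + 2*a := by ring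
    rw [e1, e2]
    apply (ZMod.natCast_eq_natCast_iff _ _ _).1
    rw [key (b+a) (b+2*a) (by omega), key b (b+a) (by omega)]
    have hv0 : χ n b = c := by rw [hn0, h0]
    have hv1 : χ n (a+b) = c := by rw [hn1, h1]
    have hv2 : χ n (a*2+b) = c := by rw [hn2, h2]
    have e3 : a + b = b + a := by ring
    have e4 : a * 2 + b = b + 2*a := by ring
    rw [e3] at hv1; rw [e4] at hv2
    rw [hv1, hv2, hv0]

set_option maxHeartbeats 1000000 in
lemma analytic_facts (k : ℕ) (hk : Real.exp 10000 ≤ (k : ℝ)) :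
    ∃ N r : ℕ, 0 < N ∧
      (2*N - rothNumberNat N)^r * N < (2*N)^r ∧
      r ≤ rothNumberNat (k/2) ∧
      Real.exp ((Real.log k)^2/100) < (N : ℝ) ∧
      2 ≤ N := by
  have hk0 : (0:ℝ) < k := lt_of_lt_of_le (Real.exp_pos _) hk
  have hkn : 0 < k := by exact_mod_cast hk0
  set x := Real.log k with hxdef
  have hx : 10000 ≤ x := by
    rw [hxdef, ← Real.log_exp 10000]
    exact Real.log_le_log (Real.exp_pos _) hk
  have hx0 : (0:ℝ) < x := by linarith
  set E := Real.exp (x^2/100) with hE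
  set N : ℕ := ⌊E⌋₊ + 2 with hN
  have hE1 : (1:ℝ) ≤ E := Real.one_le_exp (by positivity)
  have hNE : E < (N:ℝ) := by
    have := Nat.lt_floor_add_one E
    push_cast [hN]
    linarith
  have hN0 : 0 < N := by omega
  have hN2 : 2 ≤ N := by omega
  have hNR : (0:ℝ) < N := by exact_mod_cast hN0
  have hNle : (N:ℝ) ≤ 3 * E := by
    have h1 : (⌊E⌋₊ : ℝ) ≤ E := Nat.floor_le (by linarith)
    push_cast [hN]
    linarith
  -- log N ≤ x^2/50
  have hlogN : Real.log N ≤ x^2/50 := by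
    rw [Real.log_le_iff_le_exp hNR]
    have h3 : (3:ℝ) ≤ E := by
      have h1 : 1 + x^2/100 ≤ E := by
        have := Real.add_one_le_exp (x^2/100)
        rw [hE]; linarith
      nlinarith
    calc (N:ℝ) ≤ 3*E := hNle
      _ ≤ E * E := by nlinarith
      _ = Real.exp (x^2/50) := by rw [hE, ← Real.exp_add]; ring_nf
  have hlogN0 : 0 ≤ Real.log N := Real.log_nonneg (by exact_mod_cast hN0)
  -- sqrt log N ≤ x / 7
  have hsq : Real.sqrt (Real.log N) ≤ x / 7 := by
    have h1 : Real.log N ≤ (x/7)^2 := by nlinarith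
    calc Real.sqrt (Real.log N) ≤ Real.sqrt ((x/7)^2) := Real.sqrt_le_sqrt h1
      _ = x/7 := Real.sqrt_sq (by positivity)
  -- Behrend lower bound for a
  set a : ℕ := rothNumberNat N with ha
  have hBeh : (N:ℝ) * Real.exp (-4 * Real.sqrt (Real.log N)) ≤ (a:ℝ) :=
    Behrend.roth_lower_bound
  have haN : (N:ℝ) * Real.exp (-(4*x/7)) ≤ (a:ℝ) := by
    refine le_trans ?_ hBeh
    have h1 : Real.exp (-(4*x/7)) ≤ Real.exp (-4 * Real.sqrt (Real.log N)) := by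
      apply Real.exp_le_exp.2
      nlinarith [Real.sqrt_nonneg (Real.log N)]
    nlinarith [Real.exp_pos (-(4*x/7))]
  have ha0 : (0:ℝ) < a := lt_of_lt_of_le (by positivity) haN
  have han : 0 < a := by exact_mod_cast ha0
  -- N / a ≤ exp(4x/7)
  have hNa : (N:ℝ) / a ≤ Real.exp (4*x/7) := by
    rw [div_le_iff₀ ha0]
    calc (N:ℝ) = N * (Real.exp (-(4*x/7)) * Real.exp (4*x/7)) := by
          rw [← Real.exp_add]; simp
      _ = (N * Real.exp (-(4*x/7))) * Real.exp (4*x/7) := by ring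
      _ ≤ (a:ℝ) * Real.exp (4*x/7) :=
          mul_le_mul_of_nonneg_right haN (Real.exp_nonneg _)
      _ = Real.exp (4*x/7) * a := by ring
  -- definition of r
  set y : ℝ := (2*N/(a:ℝ)) * Real.log N with hy
  have hy0 : 0 ≤ y := by
    apply mul_nonneg _ hlogN0
    positivity
  set r : ℕ := ⌈y⌉₊ + 1 with hr
  have hyr : y < r := by
    have := Nat.le_ceil y
    push_cast [hr]
    linarith
  have hrR : (r:ℝ) < y + 2 := by
    have := Nat.ceil_lt_add_one hy0
    push_cast [hr]
    linarith
  -- r ≤ exp(7x/10)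
  have hrbound : (r:ℝ) ≤ Real.exp (7*x/10) := by
    have hyb : y ≤ Real.exp (4*x/7) * (x^2/25) := by
      have h2 : (2*(N:ℝ)/(a:ℝ)) = 2 * ((N:ℝ)/a) := by ring
      rw [hy, h2]
      have h4 := mul_le_mul (by linarith [hNa] : 2 * ((N:ℝ)/a) ≤ 2 * Real.exp (4*x/7))
        hlogN hlogN0 (by positivity)
      calc 2 * ((N:ℝ)/a) * Real.log N ≤ 2 * Real.exp (4*x/7) * (x^2/50) := h4
        _ = Real.exp (4*x/7) * (x^2/25) := by ring
    -- x^2 ≤ exp(x/20)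
    have hx2 : x^2 ≤ Real.exp (x/20) := by
      have h80 : x/80 ≤ Real.exp (x/80) := by
        have := Real.add_one_le_exp (x/80)
        linarith
      have hp : (x/80)^4 ≤ (Real.exp (x/80))^4 :=
        pow_le_pow_left₀ (by positivity) h80 4
      have he : (Real.exp (x/80))^4 = Real.exp (x/20) := by
        rw [← Real.exp_nat_mul]
        congr 1
        push_cast
        ring
      have h1 : 10000^2 ≤ x^2 := by nlinarith
      have h2 : x^2 ≤ (x/80)^4 := by nlinarith
      linarith
    have hy2 : y ≤ Real.exp (4*x/7 + x/20) := by
      have h5 : Real.exp (4*x/7) * x^2 ≤ Real.exp (4*x/7) * Real.exp (x/20) :=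
        mul_le_mul_of_nonneg_left hx2 (Real.exp_nonneg (4*x/7))
      rw [← Real.exp_add] at h5
      have h6 : Real.exp (4*x/7) * (x^2/25) ≤ Real.exp (4*x/7) * x^2 := by
        apply mul_le_mul_of_nonneg_left _ (Real.exp_nonneg (4*x/7))
        nlinarith
      linarith
    have h2exp : Real.exp (4*x/7 + x/20) + 2 ≤ Real.exp (7*x/10) := by
      have hmono : Real.exp (4*x/7 + x/20 + 1) ≤ Real.exp (7*x/10) := by
        apply Real.exp_le_exp.2
        linarith
      have h6 : Real.exp (4*x/7 + x/20) * Real.exp 1 ≤ Real.exp (7*x/10) := by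
        rw [← Real.exp_add]; exact hmono
      have he1 : (2:ℝ) ≤ Real.exp 1 := by
        have := Real.add_one_le_exp 1
        linarith
      have hE1b : 2 ≤ Real.exp (4*x/7 + x/20) := by
        have := Real.add_one_le_exp (4*x/7 + x/20)
        linarith
      nlinarith [Real.exp_pos (4*x/7 + x/20)]
    linarith
  -- rothNumberNat (k/2) ≥ exp(9x/10)
  set K' : ℕ := k/2 with hK'
  have hkl : (3:ℝ) ≤ k := by
    have := Real.add_one_le_exp (10000:ℝ)
    linarith
  have hK'R : ((k:ℝ) - 1)/2 ≤ (K':ℝ) := by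
    have h7 : k ≤ 2*K' + 1 := by omega
    have h8 : (k:ℝ) ≤ 2*(K':ℝ) + 1 := by exact_mod_cast h7
    linarith
  have hK'3 : (k:ℝ)/3 ≤ (K':ℝ) := by linarith
  have hK'0 : (0:ℝ) < K' := by linarith
  have hK'n : 0 < K' := by exact_mod_cast hK'0
  have hlogK' : Real.log K' ≤ x := by
    rw [hxdef]
    apply Real.log_le_log hK'0
    have : K' ≤ k := by omega
    exact_mod_cast this
  have hlogK'0 : 0 ≤ Real.log K' := Real.log_nonneg (by exact_mod_cast hK'n)
  have hsqK' : Real.sqrt (Real.log K') ≤ x/100 := by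
    have h1 : Real.log K' ≤ (x/100)^2 := by nlinarith
    calc Real.sqrt (Real.log K') ≤ Real.sqrt ((x/100)^2) := Real.sqrt_le_sqrt h1
      _ = x/100 := Real.sqrt_sq (by positivity)
  have hVbig : Real.exp (9*x/10) ≤ (rothNumberNat K' : ℝ) := by
    have hBehV : (K':ℝ) * Real.exp (-4 * Real.sqrt (Real.log K')) ≤ (rothNumberNat K' : ℝ) :=
      Behrend.roth_lower_bound
    have h1 : Real.exp (-(x/25)) ≤ Real.exp (-4 * Real.sqrt (Real.log K')) := by
      apply Real.exp_le_exp.2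
      nlinarith [Real.sqrt_nonneg (Real.log K')]
    have h2 : Real.exp (x - 2) ≤ (K':ℝ) := by
      have hk' : Real.exp x = (k:ℝ) := Real.exp_log hk0
      have h3 : Real.exp (x-2) = Real.exp x / Real.exp 2 := by
        rw [← Real.exp_sub]
      have he2 : (3:ℝ) ≤ Real.exp 2 := by
        have b1 := Real.add_one_le_exp (1:ℝ)
        have b2 : Real.exp 1 * Real.exp 1 = Real.exp 2 := by
          rw [← Real.exp_add]; norm_num
        nlinarith
      rw [h3, hk']
      have : (k:ℝ)/Real.exp 2 ≤ (k:ℝ)/3 :=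
        div_le_div_of_nonneg_left (by linarith) (by linarith) he2
      linarith
    calc Real.exp (9*x/10) ≤ Real.exp (x - 2) * Real.exp (-(x/25)) := by
          rw [← Real.exp_add]
          apply Real.exp_le_exp.2
          linarith
      _ ≤ (K':ℝ) * Real.exp (-4 * Real.sqrt (Real.log K')) := by
          apply mul_le_mul h2 h1 (Real.exp_nonneg _) (by linarith)
      _ ≤ _ := hBehV
  have hrV : r ≤ rothNumberNat K' := by
    have h1 : (r:ℝ) ≤ (rothNumberNat K' : ℝ) := by
      refine hrbound.trans (le_trans ?_ hVbig)
      apply Real.exp_le_exp.2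
      linarith
    exact_mod_cast h1
  -- the key decay inequality
  have hdecay : (2*N - a)^r * N < (2*N)^r := by
    have haN2 : a ≤ 2*N := by
      have : a ≤ N := (rothNumberNat_le N)
      omega
    rcases Nat.eq_or_lt_of_le haN2 with heq | hlt
    · -- a = 2N impossible since a ≤ N < 2N
      exfalso
      have : a ≤ N := rothNumberNat_le N
      omega
    have hcast : ((2*N - a : ℕ) : ℝ) = 2*(N:ℝ) - a := by
      rw [Nat.cast_sub haN2]
      push_cast
      ring
    -- real version
    have hreal : (2*(N:ℝ) - a)^r * N < (2*(N:ℝ))^r := by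
      have hba : 2*(N:ℝ) - a ≤ 2*N * Real.exp (-((a:ℝ)/(2*N))) := by
        have h1 : 1 - (a:ℝ)/(2*N) ≤ Real.exp (-((a:ℝ)/(2*N))) := by
          have := Real.add_one_le_exp (-((a:ℝ)/(2*N)))
          linarith
        have h2 : 2*(N:ℝ) * (1 - (a:ℝ)/(2*N)) = 2*N - a := by
          field_simp
        nlinarith
      have hnn : (0:ℝ) ≤ 2*(N:ℝ) - a := by
        have : (a:ℝ) ≤ 2*N := by exact_mod_cast haN2
        linarith
      have hpow : (2*(N:ℝ) - a)^r ≤ (2*(N:ℝ))^r * Real.exp (-((a:ℝ)/(2*N)))^r := by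
        calc (2*(N:ℝ) - a)^r ≤ (2*N * Real.exp (-((a:ℝ)/(2*N))))^r :=
              pow_le_pow_left₀ hnn hba r
          _ = (2*(N:ℝ))^r * Real.exp (-((a:ℝ)/(2*N)))^r := mul_pow _ _ _
      have hexp : Real.exp (-((a:ℝ)/(2*N)))^r * (N:ℝ) < 1 := by
        rw [← Real.exp_nat_mul]
        have hlt2 : Real.log N < r * (a/(2*N)) := by
          have h3 : y < r := hyr
          rw [hy] at h3
          have h4 : Real.log N * (2*(N:ℝ)/a) < r := by
            calc Real.log N * (2*(N:ℝ)/a) = 2*(N:ℝ)/a * Real.log N := by ring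
            _ < r := by
                  have : (2*(N:ℝ))/(a:ℝ) = 2*(N:ℝ)/a := by ring
                  push_cast at h3 ⊢
                  linarith [h3]
          have h5 : (0:ℝ) < a/(2*N) := by positivity
          calc Real.log N = (Real.log N * (2*(N:ℝ)/a)) * (a/(2*N)) := by
                field_simp
            _ < r * (a/(2*N)) := by
                apply mul_lt_mul_of_pos_right h4 h5
        have h6 : (N:ℝ) < Real.exp (r * (a/(2*N))) := by
          rw [← Real.log_lt_iff_lt_exp hNR]
          exact hlt2
        have h7 : Real.exp ((r:ℝ) * -((a:ℝ)/(2*N))) = 1 / Real.exp ((r:ℝ) * ((a:ℝ)/(2*N))) := by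
          rw [show (r:ℝ) * -((a:ℝ)/(2*N)) = -((r:ℝ)*((a:ℝ)/(2*N))) by ring, Real.exp_neg,
            inv_eq_one_div]
        rw [h7, div_mul_eq_mul_div, div_lt_iff₀ (Real.exp_pos _)]
        simpa using h6
      calc (2*(N:ℝ) - a)^r * N ≤ ((2*(N:ℝ))^r * Real.exp (-((a:ℝ)/(2*N)))^r) * N :=
            mul_le_mul_of_nonneg_right hpow hNR.le
        _ = (2*(N:ℝ))^r * (Real.exp (-((a:ℝ)/(2*N)))^r * N) := by ring
        _ < (2*(N:ℝ))^r * 1 := by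
            apply mul_lt_mul_of_pos_left hexp
            positivity
        _ = (2*(N:ℝ))^r := mul_one _
    -- transfer to ℕ
    have h9 := hreal
    rw [← hcast] at h9
    exact_mod_cast h9
  exact ⟨N, r, hN0, hdecay, hrV, hNE, hN2⟩

end Aux

theorem stmt_14 : ∃ c : ℝ, 0 < c ∧ ∃ K : ℕ, ∀ k : ℕ, K ≤ k →
    (k : ℝ) ^ (c * Real.log k) < (Lfn k 2 : ℝ) := by
  refine ⟨1/100, by norm_num, ⌈Real.exp 10000⌉₊ + 1, ?_⟩
  intro k hkK
  have hk : Real.exp 10000 ≤ (k : ℝ) := by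
    have h1 : Real.exp 10000 ≤ (⌈Real.exp 10000⌉₊ : ℝ) := Nat.le_ceil _
    have h2 : (⌈Real.exp 10000⌉₊ : ℝ) ≤ (k : ℝ) := by
      exact_mod_cast Nat.le_of_succ_le hkK
    linarith
  have hk0R : (0:ℝ) < k := lt_of_lt_of_le (Real.exp_pos _) hk
  have hk0 : 0 < k := by exact_mod_cast hk0R
  obtain ⟨N, r, hN0, hdecay, hrV, hNexp, hN2⟩ := analytic_facts k hk
  obtain ⟨A, hA, hAcard, h3A⟩ := rothNumberNat_spec N
  obtain ⟨V, hV, hVcard, h3V⟩ := rothNumberNat_spec (k/2)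
  obtain ⟨w, hwlt, hwbad⟩ := exists_bad_word (k := k) (r := r) hA h3A hV h3V hk0 hN0
    (by omega) (by rw [hAcard]; exact hdecay) (by rw [hVcard]; exact hrV)
  set S := {n : ℕ | ∀ w : ℕ → ℕ, (∀ i, w i < k) → ContainsCongPow k 2 n w} with hS
  have hne : S.Nonempty := congSet_nonempty k hk0
  have hup : ∀ n, n ∈ S → n + 1 ∈ S := by
    intro n hn w' hw'
    obtain ⟨i, d, h1, h2, h3⟩ := hn w' hw'
    exact ⟨i, d, h1, by omega, h3⟩
  have hmono : ∀ m n : ℕ, m ≤ n → m ∈ S → n ∈ S := by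
    intro m n hmn hm
    induction n, hmn using Nat.le_induction with
    | base => exact hm
    | succ n hmn ih => exact hup n ih
  have hsinf : sInf S ∈ S := Nat.sInf_mem hne
  have hLfn : N ≤ Lfn k 2 := by
    by_contra hc
    push_neg at hc
    have hle : Lfn k 2 ≤ N - 1 := by
      have : Lfn k 2 < N := hc
      omega
    have hmem : (N - 1 : ℕ) ∈ S := hmono _ _ hle hsinf
    exact hwbad (hmem w hwlt)
  have hcast : (N : ℝ) ≤ (Lfn k 2 : ℝ) := by exact_mod_cast hLfn
  have hrpow : (k : ℝ) ^ ((1/100 : ℝ) * Real.log k) = Real.exp ((Real.log k)^2/100) := by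
    rw [Real.rpow_def_of_pos hk0R]
    congr 1
    ring
  rw [hrpow]
  linarith
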